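/- For any N×n real matrices A (of rank r ≥ 1) and E and any 1 ≤ k ≤ r, if the k-th largest singular value σ̃_k of A + E is positive, then σ̃_k ≤ σ_k + 2√k·‖E‖²/σ̃_k + k·‖E‖³/σ̃_k² + ‖Uᵀ·E·V‖. -/

import Mathlib

open MeasureTheory ProbabilityTheory Matrix

noncomputable section

/-- ℓ²→ℓ² operator (spectral) norm of a real matrix. -/
def opNorm {m n : Type*} [Fintype m] [Fintype n] [DecidableEq n]
    (M : Matrix m n ℝ) : ℝ :=
  ‖LinearMap.toContinuousLinearMap (Matrix.toEuclideanLin M)‖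

/-- ℓ²→ℓ² operator (spectral) norm of a complex matrix. -/
def opNormC {m n : Type*} [Fintype m] [Fintype n] [DecidableEq n]
    (M : Matrix m n ℂ) : ℝ :=
  ‖LinearMap.toContinuousLinearMap (Matrix.toEuclideanLin M)‖

/-- Euclidean norm of a finitely indexed real vector. -/
def vnorm {n : Type*} [Fintype n] (x : n → ℝ) : ℝ :=
  Real.sqrt (∑ i, (x i) ^ 2)

/-- `‖M‖_{2,∞}`: the maximum Euclidean norm of the rows of `M`. -/
def twoInf {m n : Type*} [Fintype m] [Fintype n] (M : Matrix m n ℝ) : ℝ :=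
  ⨆ i, vnorm (M i)

/-- The diagonal matrix `diag (σ 1, …, σ m)` built from a 1-indexed sequence `σ`. -/
def sdiag {m : ℕ} (σ : ℕ → ℝ) : Matrix (Fin m) (Fin m) ℝ :=
  Matrix.of fun i j => if i = j then σ ((i : ℕ) + 1) else 0

/-- Orthogonal projection `W_{k,s} W_{k,s}ᵀ` onto the span of the (1-indexed)
columns `k,…,s` of `W`. -/
def projSlice {N m : ℕ} (W : Matrix (Fin N) (Fin m) ℝ) (k s : ℕ) :
    Matrix (Fin N) (Fin N) ℝ :=
  Matrix.of fun a b =>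
    ∑ j : Fin m, if k ≤ (j : ℕ) + 1 ∧ (j : ℕ) + 1 ≤ s then W a j * W b j else 0

/-- `‖·‖_{2,∞}` of the submatrix of `M` given by the (1-indexed) columns `k,…,s`. -/
def sliceTwoInf {N m : ℕ} (M : Matrix (Fin N) (Fin m) ℝ) (k s : ℕ) : ℝ :=
  ⨆ a, Real.sqrt (∑ j : Fin m,
    if k ≤ (j : ℕ) + 1 ∧ (j : ℕ) + 1 ≤ s then (M a j) ^ 2 else 0)

/-- `η = (11 b²/(b−1)²) √(2 (log 9) r + (K+7) log(N+n))`. -/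
def eta (N n r : ℕ) (K b : ℝ) : ℝ :=
  11 * b ^ 2 / (b - 1) ^ 2 *
    Real.sqrt (2 * Real.log 9 * r + (K + 7) * Real.log ((N : ℝ) + n))

/-- `χ(b) = 1 + 1/(4b(b−1))`. -/
def chi (b : ℝ) : ℝ := 1 + 1 / (4 * b * (b - 1))

/-- `ξ(b) = 1 + 1/(2(b−1)²)`. -/
def xib (b : ℝ) : ℝ := 1 + 1 / (2 * (b - 1) ^ 2)

/-- `γ = (9 b²/(b−1)²) √(r (K+7) log(N+n))`. -/
def gam (N n r : ℕ) (K b : ℝ) : ℝ :=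
  9 * b ^ 2 / (b - 1) ^ 2 *
    Real.sqrt ((r : ℝ) * (K + 7) * Real.log ((N : ℝ) + n))

/-- `min {δ_{k-1}, δ_s}` where `δ_j = σ_j − σ_{j+1}` (1-indexed) and `δ_0 = ∞`
(so for `k = 1` the minimum is just `δ_s`). -/
def dmin (σ : ℕ → ℝ) (k s : ℕ) : ℝ :=
  if k = 1 then σ s - σ (s + 1) else min (σ (k - 1) - σ k) (σ s - σ (s + 1))

/-- The symmetric dilation `ℰ = [[0, E], [Eᵀ, 0]]` of a rectangular matrix `E`. -/
def dil {N n : ℕ} (E : Matrix (Fin N) (Fin n) ℝ) :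
    Matrix (Fin N ⊕ Fin n) (Fin N ⊕ Fin n) ℝ :=
  Matrix.fromBlocks 0 E Eᵀ 0

/-- Complex resolvent `G(z) = (z I − ℰ)⁻¹` of the dilation. -/
def resolvC {N n : ℕ} (z : ℂ) (E : Matrix (Fin N) (Fin n) ℝ) :
    Matrix (Fin N ⊕ Fin n) (Fin N ⊕ Fin n) ℂ :=
  (z • (1 : Matrix (Fin N ⊕ Fin n) (Fin N ⊕ Fin n) ℂ) -
      (dil E).map (Complex.ofReal))⁻¹

/-- `φ₁(z) = z − ∑_{t=N+1}^{N+n} G(z)_{tt}` (complex version). -/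
def phi1C {N n : ℕ} (z : ℂ) (E : Matrix (Fin N) (Fin n) ℝ) : ℂ :=
  z - ∑ t : Fin n, resolvC z E (Sum.inr t) (Sum.inr t)

/-- `φ₂(z) = z − ∑_{t=1}^{N} G(z)_{tt}` (complex version). -/
def phi2C {N n : ℕ} (z : ℂ) (E : Matrix (Fin N) (Fin n) ℝ) : ℂ :=
  z - ∑ t : Fin N, resolvC z E (Sum.inl t) (Sum.inl t)

/-- Real resolvent `G(z) = (z I − ℰ)⁻¹` of the dilation, for real `z`. -/
def resolvR {N n : ℕ} (z : ℝ) (E : Matrix (Fin N) (Fin n) ℝ) :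
    Matrix (Fin N ⊕ Fin n) (Fin N ⊕ Fin n) ℝ :=
  (z • (1 : Matrix (Fin N ⊕ Fin n) (Fin N ⊕ Fin n) ℝ) - dil E)⁻¹

/-- `φ₁(z)` for real `z` (equals the complex version at a real point). -/
def phi1R {N n : ℕ} (z : ℝ) (E : Matrix (Fin N) (Fin n) ℝ) : ℝ :=
  z - ∑ t : Fin n, resolvR z E (Sum.inr t) (Sum.inr t)

/-- `φ₂(z)` for real `z` (equals the complex version at a real point). -/
def phi2R {N n : ℕ} (z : ℝ) (E : Matrix (Fin N) (Fin n) ℝ) : ℝ :=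
  z - ∑ t : Fin N, resolvR z E (Sum.inl t) (Sum.inl t)

/-- `Φ(z)`: diagonal matrix whose first `N` diagonal entries are `1/φ₁(z)` and whose
last `n` diagonal entries are `1/φ₂(z)`. -/
def PhiC {N n : ℕ} (z : ℂ) (E : Matrix (Fin N) (Fin n) ℝ) :
    Matrix (Fin N ⊕ Fin n) (Fin N ⊕ Fin n) ℂ :=
  Matrix.of fun p q =>
    if p = q then Sum.elim (fun _ => (phi1C z E)⁻¹) (fun _ => (phi2C z E)⁻¹) p else 0

/-- The `(N+n) × 2r` matrix `𝒰` of eigenvectors of the dilation of `A = U D Vᵀ`. -/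
def calU {N n r : ℕ} (U : Matrix (Fin N) (Fin r) ℝ) (V : Matrix (Fin n) (Fin r) ℝ) :
    Matrix (Fin N ⊕ Fin n) (Fin r ⊕ Fin r) ℝ :=
  Matrix.fromBlocks ((Real.sqrt 2)⁻¹ • U) ((Real.sqrt 2)⁻¹ • U)
    ((Real.sqrt 2)⁻¹ • V) (-((Real.sqrt 2)⁻¹ • V))

theorem Matrix.isHermitian_transpose_mul_self {α : Type*} {m n : Type*} [Fintype m]
    [CommRing α] [StarRing α] [TrivialStar α] (A : Matrix m n α) : (Aᵀ * A).IsHermitian := by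
  simpa [Matrix.conjTranspose_eq_transpose_of_trivial] using
    Matrix.isHermitian_conjTranspose_mul_self A

/-- Schatten `p`-norm: `(∑ᵢ sᵢ(M)ᵖ)^{1/p}`, where the singular values `sᵢ(M)` are the
square roots of the eigenvalues of `Mᴴ M`. -/
def schatten (p : ℝ) {m r : ℕ} (M : Matrix (Fin m) (Fin r) ℝ) : ℝ :=
  (∑ i, Real.sqrt ((Matrix.isHermitian_transpose_mul_self M).eigenvalues i) ^ p) ^ (1 / p)

namespace Stmt8Aux

/-- Euclidean norm as the norm on `EuclideanSpace`. -/
def N2 {d : ℕ} (x : Fin d → ℝ) : ℝ := ‖(WithLp.equiv 2 (Fin d → ℝ)).symm x‖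

lemma N2_eq {d : ℕ} (x : Fin d → ℝ) : N2 x = Real.sqrt (x ⬝ᵥ x) := by
  rw [N2, EuclideanSpace.norm_eq]
  congr 1
  simp [dotProduct, Real.norm_eq_abs, sq_abs, pow_two]

lemma dot_self_nonneg {d : ℕ} (x : Fin d → ℝ) : 0 ≤ x ⬝ᵥ x :=
  Finset.sum_nonneg fun i _ => mul_self_nonneg _

lemma sq_N2 {d : ℕ} (x : Fin d → ℝ) : N2 x ^ 2 = x ⬝ᵥ x := by
  rw [N2_eq, Real.sq_sqrt (dot_self_nonneg x)]

lemma N2_nonneg {d : ℕ} (x : Fin d → ℝ) : 0 ≤ N2 x := norm_nonneg _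

lemma abs_dot_le {d : ℕ} (x y : Fin d → ℝ) : |x ⬝ᵥ y| ≤ N2 x * N2 y := by
  have h : |x ⬝ᵥ y| ≤ Real.sqrt ((∑ i, x i ^ 2) * (∑ i, y i ^ 2)) := by
    rw [← Real.sqrt_sq_eq_abs]
    exact Real.sqrt_le_sqrt (Finset.sum_mul_sq_le_sq_mul_sq _ _ _)
  rw [N2_eq, N2_eq]
  calc |x ⬝ᵥ y| ≤ Real.sqrt ((∑ i, x i ^ 2) * (∑ i, y i ^ 2)) := h
    _ = Real.sqrt (x ⬝ᵥ x) * Real.sqrt (y ⬝ᵥ y) := by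
        rw [Real.sqrt_mul (Finset.sum_nonneg fun i _ => sq_nonneg _)]
        simp [dotProduct, pow_two]

lemma N2_mulVec_le {a b : ℕ} (M : Matrix (Fin a) (Fin b) ℝ) (x : Fin b → ℝ) :
    N2 (M.mulVec x) ≤ opNorm M * N2 x := by
  have h := (LinearMap.toContinuousLinearMap (Matrix.toEuclideanLin M)).le_opNorm
      ((WithLp.equiv 2 (Fin b → ℝ)).symm x)
  simpa [N2, opNorm, Matrix.toEuclideanLin_apply_piLp_toLp] using h

lemma opNorm_nonneg' {a b : Type*} [Fintype a] [Fintype b] [DecidableEq b]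
    (M : Matrix a b ℝ) : 0 ≤ opNorm M := norm_nonneg _

lemma cols_on {a b : ℕ} (W : Matrix (Fin a) (Fin b) ℝ) (h : Wᵀ * W = 1) (i j : Fin b) :
    (fun p => W p i) ⬝ᵥ (fun p => W p j) = if i = j then (1:ℝ) else 0 := by
  have := congrFun (congrFun h i) j
  simpa [Matrix.mul_apply, Matrix.one_apply, dotProduct] using this

lemma sdiag_transpose {c : ℕ} (τ : ℕ → ℝ) : (sdiag τ (m := c))ᵀ = sdiag τ := by
  funext i j
  simp only [sdiag, Matrix.transpose_apply, Matrix.of_apply]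
  rcases eq_or_ne i j with h | h
  · subst h; rfl
  · simp [h, Ne.symm h]

lemma svd_mulVec {a b c : ℕ} (W : Matrix (Fin a) (Fin c) ℝ) (X : Matrix (Fin b) (Fin c) ℝ)
    (τ : ℕ → ℝ) (hX : Xᵀ * X = 1) (j : Fin c) :
    (W * sdiag (m := c) τ * Xᵀ).mulVec (fun p => X p j) = fun p => τ ((j:ℕ)+1) * W p j := by
  rw [← Matrix.mulVec_mulVec, ← Matrix.mulVec_mulVec]
  have h1 : Xᵀ.mulVec (fun q => X q j) = fun i => if i = j then (1:ℝ) else 0 := by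
    funext i
    have := congrFun (congrFun hX i) j
    simpa [Matrix.mulVec, dotProduct, Matrix.mul_apply, Matrix.one_apply] using this
  rw [h1]
  have h2 : (sdiag τ (m := c)).mulVec (fun i => if i = j then (1:ℝ) else 0)
      = fun i => if i = j then τ ((j:ℕ)+1) else 0 := by
    funext i
    simp only [Matrix.mulVec, dotProduct, sdiag, Matrix.of_apply, mul_ite, mul_one, mul_zero,
      ite_and]
    rw [Finset.sum_ite_eq' Finset.univ j (fun x => if i = x then τ ((i:ℕ)+1) else 0)]
    simp only [Finset.mem_univ, if_true]
    rcases eq_or_ne i j with h | h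
    · subst h; simp
    · simp [h]
  rw [h2]
  funext p
  simp only [Matrix.mulVec, dotProduct, mul_ite, mul_zero]
  rw [Finset.sum_ite_eq' Finset.univ j (fun q => W p q * τ ((j:ℕ)+1))]
  simp [mul_comm]

end Stmt8Aux

namespace Stmt8Aux

lemma mulVec_isometry {a b : ℕ} (W : Matrix (Fin a) (Fin b) ℝ) (h : Wᵀ * W = 1)
    (y : Fin b → ℝ) : (W.mulVec y) ⬝ᵥ (W.mulVec y) = y ⬝ᵥ y := by
  rw [Matrix.dotProduct_mulVec, ← Matrix.mulVec_transpose, Matrix.mulVec_mulVec, h,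
    Matrix.one_mulVec]

lemma N2_mulVec_isometry {a b : ℕ} (W : Matrix (Fin a) (Fin b) ℝ) (h : Wᵀ * W = 1)
    (y : Fin b → ℝ) : N2 (W.mulVec y) = N2 y := by
  rw [N2_eq, N2_eq, mulVec_isometry W h]

lemma N2_transpose_mulVec_le {a b : ℕ} (W : Matrix (Fin a) (Fin b) ℝ) (h : Wᵀ * W = 1)
    (z : Fin a → ℝ) : N2 (Wᵀ.mulVec z) ≤ N2 z := by
  set y := Wᵀ.mulVec z with hy
  have key : y ⬝ᵥ y = z ⬝ᵥ (W.mulVec y) := by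
    rw [Matrix.dotProduct_mulVec, ← Matrix.mulVec_transpose, Matrix.transpose_transpose]
    exact dotProduct_comm _ _
  have h1 : N2 y ^ 2 ≤ N2 z * N2 y := by
    rw [sq_N2, key]
    calc z ⬝ᵥ (W.mulVec y) ≤ |z ⬝ᵥ (W.mulVec y)| := le_abs_self _
      _ ≤ N2 z * N2 (W.mulVec y) := abs_dot_le _ _
      _ = N2 z * N2 y := by rw [N2_mulVec_isometry W h]
  rcases eq_or_lt_of_le (N2_nonneg y) with h0 | h0
  · rw [← h0]; exact N2_nonneg z
  · nlinarith [h1]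

lemma N2_mulVec_le' {a b : ℕ} (M : Matrix (Fin a) (Fin b) ℝ) (x : Fin a → ℝ) :
    N2 (Mᵀ.mulVec x) ≤ opNorm M * N2 x := by
  set y := Mᵀ.mulVec x with hy
  have key : y ⬝ᵥ y = x ⬝ᵥ (M.mulVec y) := by
    rw [Matrix.dotProduct_mulVec, ← Matrix.mulVec_transpose, Matrix.transpose_transpose]
    exact dotProduct_comm _ _
  have h1 : N2 y ^ 2 ≤ N2 x * (opNorm M * N2 y) := by
    rw [sq_N2, key]
    calc x ⬝ᵥ (M.mulVec y) ≤ |x ⬝ᵥ (M.mulVec y)| := le_abs_self _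
      _ ≤ N2 x * N2 (M.mulVec y) := abs_dot_le _ _
      _ ≤ N2 x * (opNorm M * N2 y) :=
        mul_le_mul_of_nonneg_left (N2_mulVec_le M y) (N2_nonneg x)
  rcases eq_or_lt_of_le (N2_nonneg y) with h0 | h0
  · rw [← h0]; exact mul_nonneg (opNorm_nonneg' M) (N2_nonneg x)
  · nlinarith [h1, N2_nonneg x, opNorm_nonneg' M]

lemma anti (τ : ℕ → ℝ) (hd : ∀ j, 1 ≤ j → τ (j + 1) ≤ τ j) :
    ∀ a b, 1 ≤ a → a ≤ b → τ b ≤ τ a := by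
  intro a b ha hab
  induction b, hab using Nat.le_induction with
  | base => exact le_refl _
  | succ b hb ih => exact le_trans (hd b (le_trans ha hb)) ih

lemma card_le {a b : ℕ} (W : Matrix (Fin a) (Fin b) ℝ) (h : Wᵀ * W = 1) : b ≤ a := by
  have hinj : Function.Injective (Matrix.mulVecLin W) := by
    intro x y hxy
    have h2 := congrArg (fun z => Wᵀ.mulVec z) hxy
    simpa [Matrix.mulVecLin_apply, Matrix.mulVec_mulVec, h, Matrix.one_mulVec] using h2
  have := LinearMap.finrank_le_finrank_of_injective hinj
  simpa [Module.finrank_fin_fun] using this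

lemma exists_ker {p q : ℕ} (hq : q < p) (d : Fin q → Fin p → ℝ) :
    ∃ c : Fin p → ℝ, c ≠ 0 ∧ ∀ i, ∑ j, c j * d i j = 0 := by
  let T : (Fin p → ℝ) →ₗ[ℝ] (Fin q → ℝ) :=
    { toFun := fun c i => ∑ j, c j * d i j
      map_add' := by intro x y; funext i; simp [add_mul, Finset.sum_add_distrib]
      map_smul' := by intro t x; funext i; simp [Finset.mul_sum, mul_assoc] }
  have hni : ¬ Function.Injective T := by
    intro hinj
    have := LinearMap.finrank_le_finrank_of_injective hinj
    simp [Module.finrank_fin_fun] at this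
    omega
  rw [Function.not_injective_iff] at hni
  obtain ⟨x, y, hxy, hne⟩ := hni
  refine ⟨x - y, sub_ne_zero.mpr hne, fun i => ?_⟩
  have : T (x - y) = 0 := by rw [map_sub, hxy, sub_self]
  have := congrFun this i
  simpa [T, sub_mul, Finset.sum_sub_distrib] using this

end Stmt8Aux

namespace Stmt8Aux

lemma N2_add_le {d : ℕ} (x y : Fin d → ℝ) : N2 (x + y) ≤ N2 x + N2 y := by
  have h : (WithLp.equiv 2 (Fin d → ℝ)).symm (x + y)
      = (WithLp.equiv 2 (Fin d → ℝ)).symm x + (WithLp.equiv 2 (Fin d → ℝ)).symm y := rfl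
  rw [N2, h]; exact norm_add_le _ _

lemma N2_smul {d : ℕ} (t : ℝ) (x : Fin d → ℝ) : N2 (t • x) = |t| * N2 x := by
  have h : (WithLp.equiv 2 (Fin d → ℝ)).symm (t • x)
      = t • (WithLp.equiv 2 (Fin d → ℝ)).symm x := rfl
  rw [N2, h, norm_smul, Real.norm_eq_abs, N2]

lemma N2_sum_le {d p : ℕ} (f : Fin p → Fin d → ℝ) :
    N2 (∑ j, f j) ≤ ∑ j, N2 (f j) := by
  have h : (WithLp.equiv 2 (Fin d → ℝ)).symm (∑ j, f j)
      = ∑ j, (WithLp.equiv 2 (Fin d → ℝ)).symm (f j) := by simp [WithLp.toLp_sum]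
  rw [N2, h]
  exact norm_sum_le _ _

lemma proj_expand {a b : ℕ} (V : Matrix (Fin a) (Fin b) ℝ) (z : Fin a → ℝ) :
    ((1 : Matrix (Fin a) (Fin a) ℝ) - V * Vᵀ).mulVec z = z - V.mulVec (Vᵀ.mulVec z) := by
  rw [Matrix.sub_mulVec, Matrix.one_mulVec, Matrix.mulVec_mulVec]

lemma proj_sq {a b : ℕ} (V : Matrix (Fin a) (Fin b) ℝ) (hV : Vᵀ * V = 1) (z : Fin a → ℝ) :
    ((1 : Matrix (Fin a) (Fin a) ℝ) - V * Vᵀ).mulVec z ⬝ᵥ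
      ((1 : Matrix (Fin a) (Fin a) ℝ) - V * Vᵀ).mulVec z
      = z ⬝ᵥ z - (Vᵀ.mulVec z) ⬝ᵥ (Vᵀ.mulVec z) := by
  rw [proj_expand]
  have hs : (V.mulVec (Vᵀ.mulVec z)) ⬝ᵥ (V.mulVec (Vᵀ.mulVec z))
      = (Vᵀ.mulVec z) ⬝ᵥ (Vᵀ.mulVec z) := mulVec_isometry V hV _
  have hz : z ⬝ᵥ (V.mulVec (Vᵀ.mulVec z)) = (Vᵀ.mulVec z) ⬝ᵥ (Vᵀ.mulVec z) := by
    rw [Matrix.dotProduct_mulVec, ← Matrix.mulVec_transpose]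
  have hz' : (V.mulVec (Vᵀ.mulVec z)) ⬝ᵥ z = (Vᵀ.mulVec z) ⬝ᵥ (Vᵀ.mulVec z) := by
    rw [dotProduct_comm]; exact hz
  rw [sub_dotProduct, dotProduct_sub, dotProduct_sub, hs, hz, hz']
  ring

lemma bessel {a b : ℕ} (V : Matrix (Fin a) (Fin b) ℝ) (hV : Vᵀ * V = 1) (z : Fin a → ℝ) :
    (Vᵀ.mulVec z) ⬝ᵥ (Vᵀ.mulVec z) ≤ z ⬝ᵥ z := by
  have := dot_self_nonneg (((1 : Matrix (Fin a) (Fin a) ℝ) - V * Vᵀ).mulVec z)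
  rw [proj_sq V hV] at this
  linarith

lemma N2_proj_le {a b : ℕ} (V : Matrix (Fin a) (Fin b) ℝ) (hV : Vᵀ * V = 1) (z : Fin a → ℝ) :
    N2 (((1 : Matrix (Fin a) (Fin a) ℝ) - V * Vᵀ).mulVec z) ≤ N2 z := by
  rw [N2_eq, N2_eq, proj_sq V hV]
  apply Real.sqrt_le_sqrt
  have := dot_self_nonneg (Vᵀ.mulVec z)
  linarith

lemma proj_kill {a b : ℕ} (V : Matrix (Fin a) (Fin b) ℝ) (hV : Vᵀ * V = 1) (y : Fin b → ℝ) :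
    ((1 : Matrix (Fin a) (Fin a) ℝ) - V * Vᵀ).mulVec (V.mulVec y) = 0 := by
  rw [proj_expand, Matrix.mulVec_mulVec, Matrix.mulVec_mulVec, Matrix.mul_assoc, hV, Matrix.mul_one,
    sub_self]

lemma mulVec_eq_sum_cols {a b : ℕ} (M : Matrix (Fin a) (Fin b) ℝ) (g : Fin b → ℝ) :
    M.mulVec g = ∑ j, g j • (fun p => M p j) := by
  funext p
  rw [Finset.sum_apply]
  simp [Matrix.mulVec, dotProduct, mul_comm]

lemma sum_zero_off {m k : ℕ} (hkm : k ≤ m) (f : Fin m → ℝ)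
    (h0 : ∀ i : Fin m, k ≤ (i : ℕ) → f i = 0) :
    ∑ i, f i = ∑ j : Fin k, f (Fin.castLE hkm j) := by
  rw [← Finset.sum_image (s := Finset.univ) (f := f) (g := Fin.castLE hkm)
    (fun x _ y _ hxy => Fin.ext (by simpa [Fin.castLE] using congrArg Fin.val hxy))]
  apply (Finset.sum_subset (Finset.subset_univ _) _).symm
  intro x _ hx
  apply h0
  by_contra hlt
  push_neg at hlt
  exact hx (Finset.mem_image.mpr ⟨⟨(x : ℕ), hlt⟩, Finset.mem_univ _, Fin.ext rfl⟩)

end Stmt8Aux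

namespace Stmt8Aux

lemma sdiag_mulVec {c : ℕ} (τ : ℕ → ℝ) (g : Fin c → ℝ) :
    (sdiag τ (m := c)).mulVec g = fun i => τ (i.val + 1) * g i := by
  funext i
  simp only [Matrix.mulVec, dotProduct, sdiag, Matrix.of_apply, ite_mul, zero_mul]
  rw [Finset.sum_ite_eq Finset.univ i (fun b => τ ((i : ℕ) + 1) * g b)]
  simp

lemma mulVec_sum_smul {a b p : ℕ} (M : Matrix (Fin a) (Fin b) ℝ) (g : Fin p → ℝ)
    (v : Fin p → Fin b → ℝ) :
    M.mulVec (∑ j, g j • v j) = ∑ j, g j • M.mulVec (v j) := by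
  have h : M.mulVec (∑ j, g j • v j) = M.mulVecLin (∑ j, g j • v j) := rfl
  rw [h, map_sum]
  simp [Matrix.mulVecLin_apply]

lemma N2_col {a b : ℕ} (W : Matrix (Fin a) (Fin b) ℝ) (h : Wᵀ * W = 1) (j : Fin b) :
    N2 (fun p => W p j) = 1 := by
  rw [N2_eq, cols_on W h j j]
  simp

lemma sum_abs_le_sqrt {k : ℕ} (cc : Fin k → ℝ) (h : ∑ j, cc j ^ 2 = 1) :
    ∑ j, |cc j| ≤ Real.sqrt k := by
  have h1 : (∑ j, |cc j| * 1) ^ 2 ≤ (∑ j, |cc j| ^ 2) * (∑ j : Fin k, (1:ℝ) ^ 2) :=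
    Finset.sum_mul_sq_le_sq_mul_sq _ _ _
  simp only [mul_one, one_pow, sq_abs, Finset.sum_const, Finset.card_univ, Fintype.card_fin,
    nsmul_eq_mul, h, one_mul] at h1
  have h2 : 0 ≤ ∑ j, |cc j| := Finset.sum_nonneg fun j _ => abs_nonneg _
  calc ∑ j, |cc j| = Real.sqrt ((∑ j, |cc j|) ^ 2) := (Real.sqrt_sq h2).symm
    _ ≤ Real.sqrt k := Real.sqrt_le_sqrt h1

lemma final_arith (s σk c1 e W sk rk : ℝ) (hs : 0 < s) (hσk : 0 < σk)
    (hc1 : 0 ≤ c1) (he : 0 ≤ e) (hW : 0 ≤ W) (hsk : 1 ≤ sk) (hrk : 0 ≤ rk)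
    (hWb : W ≤ sk * e / s)
    (hmain : s ^ 2 ≤ σk ^ 2 + 2 * (σk * (c1 + e * W)) + e ^ 2) :
    s ≤ σk + 2 * sk * e ^ 2 / s + rk * e ^ 3 / s ^ 2 + c1 := by
  have ht0 : 0 ≤ e ^ 2 / s := by positivity
  have hcube : 0 ≤ rk * e ^ 3 / s ^ 2 := by positivity
  rcases le_or_gt s σk with hle | hlt
  · have h2 : 0 ≤ 2 * sk * e ^ 2 / s := by positivity
    linarith
  · have ht : (e ^ 2 / s) * s = e ^ 2 := div_mul_cancel₀ _ (ne_of_gt hs)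
    have heW : 0 ≤ e * W := mul_nonneg he hW
    have h1 : s ≤ σk + c1 + e * W + e ^ 2 / s := by
      nlinarith [mul_nonneg (add_nonneg hc1 heW) (sub_pos.mpr hlt).le,
        mul_nonneg ht0 hσk.le, mul_pos hs (add_pos hs hσk)]
    have h2 : e * W ≤ sk * e ^ 2 / s := by
      calc e * W ≤ e * (sk * e / s) := mul_le_mul_of_nonneg_left hWb he
        _ = sk * e ^ 2 / s := by ring
    have h3 : e ^ 2 / s ≤ sk * e ^ 2 / s := by
      have := le_mul_of_one_le_left ht0 hsk
      calc e ^ 2 / s ≤ sk * (e ^ 2 / s) := this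
        _ = sk * e ^ 2 / s := by ring
    have h4 : 2 * sk * e ^ 2 / s = sk * e ^ 2 / s + sk * e ^ 2 / s := by ring
    linarith

end Stmt8Aux


set_option maxHeartbeats 1000000 in
/-- Theorem 7 of the paper, upper bound, deterministic form. -/
theorem stmt8_singular_value_upper_bound
    (N n r : ℕ) (hN : 0 < N) (hn : 0 < n) (hr : 0 < r)
    (A E : Matrix (Fin N) (Fin n) ℝ)
    (U : Matrix (Fin N) (Fin r) ℝ) (V : Matrix (Fin n) (Fin r) ℝ) (σ : ℕ → ℝ)
    (hU : Uᵀ * U = 1) (hV : Vᵀ * V = 1) (hA : A = U * sdiag (m := r) σ * Vᵀ)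
    (hσpos : ∀ j, 1 ≤ j → j ≤ r → 0 < σ j)
    (hσdec : ∀ j, 1 ≤ j → σ (j + 1) ≤ σ j)
    (hσzero : ∀ j, r < j → σ j = 0)
    (m : ℕ) (hm : m = min N n)
    (Ut : Matrix (Fin N) (Fin m) ℝ) (Vt : Matrix (Fin n) (Fin m) ℝ) (σt : ℕ → ℝ)
    (hUt : Utᵀ * Ut = 1) (hVt : Vtᵀ * Vt = 1)
    (hAt : A + E = Ut * sdiag (m := m) σt * Vtᵀ)
    (hσtdec : ∀ j, 1 ≤ j → σt (j + 1) ≤ σt j)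
    (hσtnn : ∀ j, 1 ≤ j → 0 ≤ σt j)
    (k : ℕ) (hk1 : 1 ≤ k) (hkr : k ≤ r) (hpos : 0 < σt k) :
    σt k ≤ σ k + 2 * Real.sqrt k * opNorm E ^ 2 / σt k +
        k * opNorm E ^ 3 / σt k ^ 2 + opNorm (Uᵀ * E * V) := by
  classical
  have he0 : 0 ≤ opNorm E := Stmt8Aux.opNorm_nonneg' E
  have hc10 : 0 ≤ opNorm (Uᵀ * E * V) := Stmt8Aux.opNorm_nonneg' _
  have hσk : 0 < σ k := hσpos k hk1 hkr
  have hkm : k ≤ m := by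
    rw [hm]
    exact le_min (hkr.trans (Stmt8Aux.card_le U hU)) (hkr.trans (Stmt8Aux.card_le V hV))
  have hk1r : k - 1 ≤ r := by omega
  have hklt : k - 1 < k := by omega
  have hσt_anti := Stmt8Aux.anti σt hσtdec
  have hσ_anti := Stmt8Aux.anti σ hσdec
  set vcol : Fin r → (Fin n → ℝ) := fun i a => V a i with hvcol
  set vtcol : Fin m → (Fin n → ℝ) := fun i a => Vt a i with hvtcol
  set utcol : Fin m → (Fin N → ℝ) := fun i a => Ut a i with hutcol
  obtain ⟨c, hc0, hcker⟩ := Stmt8Aux.exists_ker hklt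
      (fun i j => vcol (Fin.castLE hk1r i) ⬝ᵥ vtcol (Fin.castLE hkm j))
  set nc := Real.sqrt (∑ j, c j ^ 2) with hnc
  have hncsq : nc ^ 2 = ∑ j, c j ^ 2 :=
    Real.sq_sqrt (Finset.sum_nonneg fun j _ => sq_nonneg _)
  have hncpos : 0 < nc := by
    rw [hnc, Real.sqrt_pos]
    obtain ⟨j0, hj0⟩ : ∃ j, c j ≠ 0 := by
      by_contra hall; push_neg at hall; exact hc0 (funext hall)
    have h1 : 0 < c j0 ^ 2 := by positivity
    exact lt_of_lt_of_le h1
      (Finset.single_le_sum (fun i _ => sq_nonneg (c i)) (Finset.mem_univ j0))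
  set cc : Fin k → ℝ := fun j => c j / nc with hcc
  have hccsum : ∑ j, cc j ^ 2 = 1 := by
    simp only [hcc, div_pow]
    rw [← Finset.sum_div, ← hncsq, div_self (by positivity)]
  have hccker : ∀ i : Fin (k - 1),
      ∑ j, cc j * (vcol (Fin.castLE hk1r i) ⬝ᵥ vtcol (Fin.castLE hkm j)) = 0 := by
    intro i
    have h1 : ∑ j, cc j * (vcol (Fin.castLE hk1r i) ⬝ᵥ vtcol (Fin.castLE hkm j))
        = (∑ j, c j * (vcol (Fin.castLE hk1r i) ⬝ᵥ vtcol (Fin.castLE hkm j))) / nc := by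
      rw [Finset.sum_div]
      exact Finset.sum_congr rfl fun j _ => by rw [hcc]; ring
    rw [h1, hcker i, zero_div]
  set ccm : Fin m → ℝ := fun i => if h : (i : ℕ) < k then cc ⟨(i : ℕ), h⟩ else 0 with hccm
  have hccm_cast : ∀ j : Fin k, ccm (Fin.castLE hkm j) = cc j := by
    intro j
    simp only [hccm, Fin.coe_castLE, j.isLt, dif_pos, Fin.eta]
  have hccm_ge : ∀ i : Fin m, k ≤ (i : ℕ) → ccm i = 0 := by
    intro i hi
    simp only [hccm, dif_neg (by omega : ¬ (i : ℕ) < k)]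
  set x : Fin n → ℝ := Vt.mulVec ccm with hx
  have hccmdot : ccm ⬝ᵥ ccm = 1 := by
    rw [dotProduct, Stmt8Aux.sum_zero_off hkm (fun i => ccm i * ccm i)
      (fun i hi => by show ccm i * ccm i = 0; rw [hccm_ge i hi]; ring)]
    have h4 : ∀ j : Fin k, ccm (Fin.castLE hkm j) * ccm (Fin.castLE hkm j) = cc j ^ 2 :=
      fun j => by rw [hccm_cast j]; ring
    rw [Finset.sum_congr rfl fun j _ => h4 j]
    exact hccsum
  have hxx : x ⬝ᵥ x = 1 := by rw [hx, Stmt8Aux.mulVec_isometry Vt hVt, hccmdot]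
  have hN2x : Stmt8Aux.N2 x = 1 := by rw [Stmt8Aux.N2_eq, hxx, Real.sqrt_one]
  -- the perturbed matrix applied to x
  have hAtx : (A + E).mulVec x = Ut.mulVec (fun i => σt (i.val + 1) * ccm i) := by
    rw [hAt, hx, Matrix.mulVec_mulVec, Matrix.mul_assoc (Ut * sdiag (m := m) σt) Vtᵀ Vt, hVt,
      Matrix.mul_one, ← Matrix.mulVec_mulVec, Stmt8Aux.sdiag_mulVec]
  have hAtdot : (A + E).mulVec x ⬝ᵥ (A + E).mulVec x = ∑ i, (σt (i.val + 1) * ccm i) ^ 2 := by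
    rw [hAtx, Stmt8Aux.mulVec_isometry Ut hUt, dotProduct]
    exact Finset.sum_congr rfl fun i _ => (pow_two _).symm
  have hlow : σt k ^ 2 ≤ (A + E).mulVec x ⬝ᵥ (A + E).mulVec x := by
    rw [hAtdot]
    calc σt k ^ 2 = σt k ^ 2 * (ccm ⬝ᵥ ccm) := by rw [hccmdot]; ring
      _ = ∑ i, σt k ^ 2 * (ccm i * ccm i) := by rw [dotProduct, Finset.mul_sum]
      _ ≤ ∑ i, (σt (i.val + 1) * ccm i) ^ 2 := by
          apply Finset.sum_le_sum
          intro i _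
          by_cases hik : (i : ℕ) < k
          · have h1 : σt k ≤ σt (i.val + 1) := hσt_anti _ _ (by omega) (by omega)
            nlinarith [mul_le_mul h1 h1 hpos.le (le_trans hpos.le h1), mul_self_nonneg (ccm i)]
          · rw [hccm_ge i (by omega)]; simp
  -- the unperturbed matrix applied to x
  set p : Fin r → ℝ := Vᵀ.mulVec x with hp
  set g : Fin r → ℝ := fun i => σ (i.val + 1) * p i with hg
  have hAx : A.mulVec x = U.mulVec g := by
    rw [hA, ← Matrix.mulVec_mulVec, ← Matrix.mulVec_mulVec, Stmt8Aux.sdiag_mulVec]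
  have hporth : ∀ i : Fin r, (i : ℕ) < k - 1 → p i = 0 := by
    intro i hi
    have hpi : p i = vcol i ⬝ᵥ x := by
      rw [hp]; simp [Matrix.mulVec, dotProduct, hvcol]
    have hci : Fin.castLE hk1r ⟨(i : ℕ), hi⟩ = i := Fin.ext rfl
    rw [hpi, hx, Matrix.dotProduct_mulVec, ← Matrix.mulVec_transpose]
    have h2 : (Vtᵀ.mulVec (vcol i)) ⬝ᵥ ccm = ∑ i', (Vtᵀ.mulVec (vcol i)) i' * ccm i' := rfl
    rw [h2, Stmt8Aux.sum_zero_off hkm (fun i' => (Vtᵀ.mulVec (vcol i)) i' * ccm i')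
      (fun i' hi' => by show _ * ccm i' = 0; rw [hccm_ge i' hi']; ring)]
    have h3 : ∀ j : Fin k, (Vtᵀ.mulVec (vcol i)) (Fin.castLE hkm j) * ccm (Fin.castLE hkm j)
        = cc j * (vcol (Fin.castLE hk1r ⟨(i : ℕ), hi⟩) ⬝ᵥ vtcol (Fin.castLE hkm j)) := by
      intro j
      rw [hccm_cast j, hci, mul_comm]
      congr 1
      simp [Matrix.mulVec, dotProduct, hvcol, hvtcol, mul_comm]
    rw [Finset.sum_congr rfl fun j _ => h3 j]
    exact hccker ⟨(i : ℕ), hi⟩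
  have hpbes : p ⬝ᵥ p ≤ 1 := by
    rw [hp]
    have h1 := Stmt8Aux.bessel V hV x
    rwa [hxx] at h1
  have hgdot : g ⬝ᵥ g ≤ σ k ^ 2 := by
    have h1 : g ⬝ᵥ g ≤ σ k ^ 2 * (p ⬝ᵥ p) := by
      rw [dotProduct, dotProduct, Finset.mul_sum]
      apply Finset.sum_le_sum
      intro i _
      by_cases hik : (i : ℕ) < k - 1
      · rw [hg]; simp only [hporth i hik]; simp
      · have h2 : σ (i.val + 1) ≤ σ k := hσ_anti k (i.val + 1) hk1 (by omega)
        have h3 : 0 < σ (i.val + 1) := hσpos _ (by omega) (by omega)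
        simp only [hg]
        nlinarith [mul_le_mul h2 h2 h3.le hσk.le, mul_self_nonneg (p i)]
    nlinarith [hpbes, sq_nonneg (σ k)]
  have hAxAx : A.mulVec x ⬝ᵥ A.mulVec x ≤ σ k ^ 2 := by
    rw [hAx, Stmt8Aux.mulVec_isometry U hU]; exact hgdot
  have hN2g : Stmt8Aux.N2 g ≤ σ k := by
    rw [Stmt8Aux.N2_eq]
    calc Real.sqrt (g ⬝ᵥ g) ≤ Real.sqrt (σ k ^ 2) := Real.sqrt_le_sqrt hgdot
      _ = σ k := Real.sqrt_sq hσk.le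
  -- projection residual w
  set w : Fin n → ℝ := ((1 : Matrix (Fin n) (Fin n) ℝ) - V * Vᵀ).mulVec x with hw
  have hwnn : 0 ≤ Stmt8Aux.N2 w := Stmt8Aux.N2_nonneg w
  have hxdecomp : x = V.mulVec (Vᵀ.mulVec x) + w := by
    rw [hw, Stmt8Aux.proj_expand]; abel
  have hq : Uᵀ.mulVec (E.mulVec x)
      = (Uᵀ * E * V).mulVec (Vᵀ.mulVec x) + Uᵀ.mulVec (E.mulVec w) := by
    conv_lhs => rw [hxdecomp]
    rw [Matrix.mulVec_add E, Matrix.mulVec_add Uᵀ, Matrix.mulVec_mulVec,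
      Matrix.mulVec_mulVec]
  have hqb : Stmt8Aux.N2 (Uᵀ.mulVec (E.mulVec x))
      ≤ opNorm (Uᵀ * E * V) + opNorm E * Stmt8Aux.N2 w := by
    rw [hq]
    apply le_trans (Stmt8Aux.N2_add_le _ _)
    have b1 : Stmt8Aux.N2 ((Uᵀ * E * V).mulVec (Vᵀ.mulVec x))
        ≤ opNorm (Uᵀ * E * V) * Stmt8Aux.N2 (Vᵀ.mulVec x) := Stmt8Aux.N2_mulVec_le _ _
    have b1' : Stmt8Aux.N2 (Vᵀ.mulVec x) ≤ 1 := by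
      have h1 := Stmt8Aux.N2_transpose_mulVec_le V hV x
      rwa [hN2x] at h1
    have b2 : Stmt8Aux.N2 (Uᵀ.mulVec (E.mulVec w)) ≤ Stmt8Aux.N2 (E.mulVec w) :=
      Stmt8Aux.N2_transpose_mulVec_le U hU _
    have b3 : Stmt8Aux.N2 (E.mulVec w) ≤ opNorm E * Stmt8Aux.N2 w := Stmt8Aux.N2_mulVec_le E w
    have b4 : Stmt8Aux.N2 ((Uᵀ * E * V).mulVec (Vᵀ.mulVec x)) ≤ opNorm (Uᵀ * E * V) := by
      calc Stmt8Aux.N2 ((Uᵀ * E * V).mulVec (Vᵀ.mulVec x))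
          ≤ opNorm (Uᵀ * E * V) * Stmt8Aux.N2 (Vᵀ.mulVec x) := b1
        _ ≤ opNorm (Uᵀ * E * V) * 1 := mul_le_mul_of_nonneg_left b1' hc10
        _ = opNorm (Uᵀ * E * V) := mul_one _
    linarith
  have hcross : |A.mulVec x ⬝ᵥ E.mulVec x|
      ≤ σ k * (opNorm (Uᵀ * E * V) + opNorm E * Stmt8Aux.N2 w) := by
    have hce : A.mulVec x ⬝ᵥ E.mulVec x = g ⬝ᵥ (Uᵀ.mulVec (E.mulVec x)) := by
      rw [hAx, dotProduct_comm (U.mulVec g), Matrix.dotProduct_mulVec,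
        ← Matrix.mulVec_transpose, dotProduct_comm]
    rw [hce]
    calc |g ⬝ᵥ (Uᵀ.mulVec (E.mulVec x))|
        ≤ Stmt8Aux.N2 g * Stmt8Aux.N2 (Uᵀ.mulVec (E.mulVec x)) := Stmt8Aux.abs_dot_le _ _
      _ ≤ σ k * (opNorm (Uᵀ * E * V) + opNorm E * Stmt8Aux.N2 w) := by
        apply mul_le_mul hN2g hqb (Stmt8Aux.N2_nonneg _) hσk.le
  have hExEx : E.mulVec x ⬝ᵥ E.mulVec x ≤ opNorm E ^ 2 := by
    have h1 : Stmt8Aux.N2 (E.mulVec x) ≤ opNorm E := by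
      have h2 := Stmt8Aux.N2_mulVec_le E x
      rwa [hN2x, mul_one] at h2
    have h3 := Stmt8Aux.sq_N2 (E.mulVec x)
    nlinarith [Stmt8Aux.N2_nonneg (E.mulVec x)]
  have hexp : (A + E).mulVec x ⬝ᵥ (A + E).mulVec x
      = A.mulVec x ⬝ᵥ A.mulVec x + 2 * (A.mulVec x ⬝ᵥ E.mulVec x)
        + E.mulVec x ⬝ᵥ E.mulVec x := by
    rw [Matrix.add_mulVec, add_dotProduct, dotProduct_add, dotProduct_add,
      dotProduct_comm (E.mulVec x) (A.mulVec x)]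
    ring
  have hmain : σt k ^ 2 ≤ σ k ^ 2
      + 2 * (σ k * (opNorm (Uᵀ * E * V) + opNorm E * Stmt8Aux.N2 w)) + opNorm E ^ 2 := by
    have h1 := le_abs_self (A.mulVec x ⬝ᵥ E.mulVec x)
    have h2 := hlow
    rw [hexp] at h2
    linarith
  -- bound on N2 w
  have hwb : Stmt8Aux.N2 w ≤ Real.sqrt k * opNorm E / σt k := by
    have hxsum : x = ∑ i : Fin m, ccm i • vtcol i := by
      rw [hx, Stmt8Aux.mulVec_eq_sum_cols]
    have hw2 : w = ∑ i : Fin m,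
        ccm i • (((1 : Matrix (Fin n) (Fin n) ℝ) - V * Vᵀ).mulVec (vtcol i)) := by
      rw [hw]
      conv_lhs => rw [hxsum]
      exact Stmt8Aux.mulVec_sum_smul _ _ _
    have hterm : ∀ i : Fin m,
        |ccm i| * Stmt8Aux.N2 (((1 : Matrix (Fin n) (Fin n) ℝ) - V * Vᵀ).mulVec (vtcol i))
          ≤ |ccm i| * (opNorm E / σt k) := by
      intro i
      by_cases hik : (i : ℕ) < k
      · apply mul_le_mul_of_nonneg_left _ (abs_nonneg _)
        have hsk : σt k ≤ σt (i.val + 1) := hσt_anti _ _ (by omega) (by omega)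
        have hsi : 0 < σt (i.val + 1) := lt_of_lt_of_le hpos hsk
        have hcol : (A + E)ᵀ.mulVec (utcol i) = σt (i.val + 1) • vtcol i := by
          have htr : (A + E)ᵀ = Vt * sdiag (m := m) σt * Utᵀ := by
            rw [hAt, Matrix.transpose_mul, Matrix.transpose_mul, Matrix.transpose_transpose,
              Stmt8Aux.sdiag_transpose, ← Matrix.mul_assoc]
          rw [htr, Stmt8Aux.svd_mulVec Vt Ut σt hUt i]
          funext a
          simp [hvtcol]
        have hvt_eq : vtcol i = (σt (i.val + 1))⁻¹ • ((A + E)ᵀ.mulVec (utcol i)) := by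
          rw [hcol, smul_smul, inv_mul_cancel₀ (ne_of_gt hsi), one_smul]
        have hkill : ((1 : Matrix (Fin n) (Fin n) ℝ) - V * Vᵀ).mulVec (Aᵀ.mulVec (utcol i))
            = 0 := by
          have hAtr : Aᵀ = V * ((sdiag (m := r) σ)ᵀ * Uᵀ) := by
            rw [hA, Matrix.transpose_mul, Matrix.transpose_mul, Matrix.transpose_transpose]
          rw [hAtr, ← Matrix.mulVec_mulVec]
          exact Stmt8Aux.proj_kill V hV _
        have hsplit2 : (A + E)ᵀ.mulVec (utcol i)
            = Aᵀ.mulVec (utcol i) + Eᵀ.mulVec (utcol i) := by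
          rw [Matrix.transpose_add, Matrix.add_mulVec]
        have hPvt : ((1 : Matrix (Fin n) (Fin n) ℝ) - V * Vᵀ).mulVec (vtcol i)
            = (σt (i.val + 1))⁻¹ •
              (((1 : Matrix (Fin n) (Fin n) ℝ) - V * Vᵀ).mulVec (Eᵀ.mulVec (utcol i))) := by
          conv_lhs => rw [hvt_eq]
          rw [Matrix.mulVec_smul, hsplit2, Matrix.mulVec_add, hkill, zero_add]
        rw [hPvt, Stmt8Aux.N2_smul]
        have hnu : Stmt8Aux.N2 (utcol i) = 1 := Stmt8Aux.N2_col Ut hUt i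
        have hb1 : Stmt8Aux.N2 (((1 : Matrix (Fin n) (Fin n) ℝ) - V * Vᵀ).mulVec
            (Eᵀ.mulVec (utcol i))) ≤ opNorm E := by
          calc Stmt8Aux.N2 (((1 : Matrix (Fin n) (Fin n) ℝ) - V * Vᵀ).mulVec
              (Eᵀ.mulVec (utcol i))) ≤ Stmt8Aux.N2 (Eᵀ.mulVec (utcol i)) :=
                Stmt8Aux.N2_proj_le V hV _
            _ ≤ opNorm E * Stmt8Aux.N2 (utcol i) := Stmt8Aux.N2_mulVec_le' E _
            _ = opNorm E := by rw [hnu, mul_one]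
        calc |(σt (i.val + 1))⁻¹| * Stmt8Aux.N2 (((1 : Matrix (Fin n) (Fin n) ℝ) - V * Vᵀ).mulVec
            (Eᵀ.mulVec (utcol i)))
            ≤ (σt (i.val + 1))⁻¹ * opNorm E := by
              rw [abs_of_pos (inv_pos.mpr hsi)]
              exact mul_le_mul_of_nonneg_left hb1 (inv_nonneg.mpr hsi.le)
          _ = opNorm E / σt (i.val + 1) := by ring
          _ ≤ opNorm E / σt k := by gcongr
      · rw [hccm_ge i (by omega)]
        simp
    have habs : ∑ i : Fin m, |ccm i| ≤ Real.sqrt k := by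
      rw [Stmt8Aux.sum_zero_off hkm (fun i => |ccm i|)
        (fun i hi => by show |ccm i| = 0; rw [hccm_ge i hi]; exact abs_zero)]
      have h5 : ∀ j : Fin k, |ccm (Fin.castLE hkm j)| = |cc j| :=
        fun j => by rw [hccm_cast j]
      rw [Finset.sum_congr rfl fun j _ => h5 j]
      exact Stmt8Aux.sum_abs_le_sqrt cc hccsum
    calc Stmt8Aux.N2 w
        ≤ ∑ i : Fin m, Stmt8Aux.N2
            (ccm i • (((1 : Matrix (Fin n) (Fin n) ℝ) - V * Vᵀ).mulVec (vtcol i))) := by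
          rw [hw2]; exact Stmt8Aux.N2_sum_le _
      _ = ∑ i : Fin m, |ccm i| * Stmt8Aux.N2
            (((1 : Matrix (Fin n) (Fin n) ℝ) - V * Vᵀ).mulVec (vtcol i)) :=
          Finset.sum_congr rfl fun i _ => Stmt8Aux.N2_smul _ _
      _ ≤ ∑ i : Fin m, |ccm i| * (opNorm E / σt k) := Finset.sum_le_sum fun i _ => hterm i
      _ = (∑ i : Fin m, |ccm i|) * (opNorm E / σt k) := by rw [← Finset.sum_mul]
      _ ≤ Real.sqrt k * (opNorm E / σt k) :=
          mul_le_mul_of_nonneg_right habs (by positivity)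
      _ = Real.sqrt k * opNorm E / σt k := by ring
  have hsk1 : 1 ≤ Real.sqrt k := by
    have h1 : (1 : ℝ) ≤ (k : ℝ) := by exact_mod_cast hk1
    calc (1 : ℝ) = Real.sqrt 1 := Real.sqrt_one.symm
      _ ≤ Real.sqrt k := Real.sqrt_le_sqrt h1
  exact Stmt8Aux.final_arith (σt k) (σ k) (opNorm (Uᵀ * E * V)) (opNorm E)
    (Stmt8Aux.N2 w) (Real.sqrt k) (k : ℝ) hpos hσk hc10 he0 hwnn hsk1
    (Nat.cast_nonneg k) hwb hmain
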